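/- Let τ ∈ (0, 1), p₁ ∈ (0, 1), and δ ∈ [0, 1). Set a := min( (1 − τ)·(1 − p₁), τ·p₁ ) and M := min( odds(τ), odds(1 − p₁) ), where odds(x) := x/(1 − x). Then p₁ − (δ/τ)·a > 0, 1 − δ·odds(1 − τ)·M > 0, and ( p₁ + (δ/(1 − τ))·a ) / ( p₁ − (δ/τ)·a ) = ( 1 + δ·M ) / ( 1 − δ·odds(1 − τ)·M ). -/

import Mathlib

/-- The odds function odds(x) = x / (1 − x). -/
noncomputable def odds (x : ℝ) : ℝ := x / (1 - x)

theorem theta_of_delta_identity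
    (τ p₁ δ : ℝ) (hτ : τ ∈ Set.Ioo (0 : ℝ) 1) (hp : p₁ ∈ Set.Ioo (0 : ℝ) 1)
    (hδ : δ ∈ Set.Ico (0 : ℝ) 1) :
    let a := min ((1 - τ) * (1 - p₁)) (τ * p₁)
    let M := min (odds τ) (odds (1 - p₁))
    0 < p₁ - (δ / τ) * a ∧ 0 < 1 - δ * odds (1 - τ) * M ∧
      (p₁ + (δ / (1 - τ)) * a) / (p₁ - (δ / τ) * a) =
        (1 + δ * M) / (1 - δ * odds (1 - τ) * M) := by
  obtain ⟨hτ0, hτ1⟩ := hτ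
  obtain ⟨hp0, hp1⟩ := hp
  obtain ⟨hδ0, hδ1⟩ := hδ
  have hτ1' : 0 < 1 - τ := by linarith
  have hp1' : 0 < 1 - p₁ := by linarith
  have hδ1' : 0 < 1 - δ := by linarith
  intro a M
  rcases le_total ((1 - τ) * (1 - p₁)) (τ * p₁) with h | h
  · have ha : a = (1 - τ) * (1 - p₁) := min_eq_left h
    have hM : M = (1 - p₁) / p₁ := by
      have : M = odds (1 - p₁) := by
        apply min_eq_right
        simp only [odds]
        rw [div_le_div_iff₀ (by simpa using hp0) hτ1']
        nlinarith
      rw [this, odds]; ring_nf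
    rw [ha, hM]
    simp only [odds]
    have hd1 : 0 < p₁ - δ / τ * ((1 - τ) * (1 - p₁)) := by
      have h2 : δ * ((1 - τ) * (1 - p₁)) < τ * p₁ := by
        nlinarith [mul_pos hτ0 hp0, mul_le_mul_of_nonneg_left h hδ0]
      rw [sub_pos, div_mul_eq_mul_div, div_lt_iff₀ hτ0]
      linarith
    have hd2 : 0 < 1 - δ * ((1 - τ) / (1 - (1 - τ))) * ((1 - p₁) / p₁) := by
      have h2 : δ * (1 - τ) * (1 - p₁) < τ * p₁ := by
        nlinarith [mul_pos hτ0 hp0, mul_le_mul_of_nonneg_left h hδ0]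
      rw [sub_pos]
      have : δ * ((1 - τ) / (1 - (1 - τ))) * ((1 - p₁) / p₁)
          = (δ * (1 - τ) * (1 - p₁)) / (τ * p₁) := by
        rw [sub_sub_cancel]
        field_simp
        try ring
      rw [this, div_lt_one (by positivity)]
      linarith
    refine ⟨hd1, hd2, ?_⟩
    rw [div_eq_div_iff (ne_of_gt hd1) (ne_of_gt hd2)]
    rw [sub_sub_cancel]
    field_simp
  · have ha : a = τ * p₁ := min_eq_right h
    have hM : M = τ / (1 - τ) := by
      apply min_eq_left
      simp only [odds]
      rw [div_le_div_iff₀ hτ1' (by simpa using hp0)]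
      nlinarith
    rw [ha, hM]
    simp only [odds]
    have hd1 : 0 < p₁ - δ / τ * (τ * p₁) := by
      have : p₁ - δ / τ * (τ * p₁) = p₁ * (1 - δ) := by field_simp
      rw [this]; positivity
    have hd2 : 0 < 1 - δ * ((1 - τ) / (1 - (1 - τ))) * (τ / (1 - τ)) := by
      have : δ * ((1 - τ) / (1 - (1 - τ))) * (τ / (1 - τ)) = δ := by
        rw [sub_sub_cancel]
        field_simp
      rw [this]; linarith
    refine ⟨hd1, hd2, ?_⟩
    rw [div_eq_div_iff (ne_of_gt hd1) (ne_of_gt hd2)]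
    rw [sub_sub_cancel]
    field_simp
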